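/- A function f: Z_2^n → {±1} satisfies ‖f‖_{U^k} = 1 if and only if f(x) = (-1)^{p(x)} for some polynomial p: Z_2^n → Z_2 of degree less than k. -/

import Mathlib

open Finset

/-- The multiplicative difference operator `Δ_h f(x) = f(x+h) · f(x)` for real
(±1-valued) functions. -/
def mulDiff {n : ℕ} (h : Fin n → ZMod 2)
    (f : (Fin n → ZMod 2) → ℝ) : (Fin n → ZMod 2) → ℝ :=
  fun x => f (x + h) * f x

/-- The `2^k`-th power of the Gowers `U^k` norm of a ±1-valued function `f`:
`E_{x,h_1,…,h_k} Δ_{h_1} ⋯ Δ_{h_k} f(x)`. -/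
noncomputable def gowersPow {n : ℕ} (k : ℕ) (f : (Fin n → ZMod 2) → ℝ) : ℝ :=
  ((2 : ℝ) ^ (n * (k + 1)))⁻¹ *
    ∑ hs : Fin k → (Fin n → ZMod 2), ∑ x : Fin n → ZMod 2,
      ((List.ofFn hs).foldr mulDiff f) x

namespace GowersAux

lemma zmod2_cases (a : ZMod 2) : a = 0 ∨ a = 1 := by revert a; decide

noncomputable def chi (a : ZMod 2) : ℝ := (-1 : ℝ) ^ a.val

lemma chi_zero : chi 0 = 1 := by norm_num [chi]

lemma chi_one : chi 1 = -1 := by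
  have : (1 : ZMod 2).val = 1 := rfl
  rw [chi, this, pow_one]

lemma chi_add (a b : ZMod 2) : chi (a + b) = chi a * chi b := by
  unfold chi
  rw [← pow_add, neg_one_pow_eq_pow_mod_two, neg_one_pow_eq_pow_mod_two (n := a.val + b.val)]
  congr 1
  revert a b; decide

lemma chi_le_one (a : ZMod 2) : chi a ≤ 1 := by
  rcases zmod2_cases a with rfl | rfl
  · rw [chi_zero]
  · rw [chi_one]; norm_num

lemma chi_eq_one_iff (a : ZMod 2) : chi a = 1 ↔ a = 0 := by
  rcases zmod2_cases a with rfl | rfl <;> simp [chi_zero, chi_one] <;> norm_num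

lemma chi_inj {a b : ZMod 2} (h : chi a = chi b) : a = b := by
  rcases zmod2_cases a with rfl | rfl <;>
    rcases zmod2_cases b with rfl | rfl <;>
    simp [chi_zero, chi_one] at h ⊢ <;> norm_num at h


variable {n : ℕ}

def addDeriv (h : Fin n → ZMod 2) (g : (Fin n → ZMod 2) → ZMod 2) :
    (Fin n → ZMod 2) → ZMod 2 := fun x => g (x + h) + g x

def monFun (S : Finset (Fin n)) : (Fin n → ZMod 2) → ZMod 2 := fun x => ∏ i ∈ S, x i

def W (n d : ℕ) : Submodule (ZMod 2) ((Fin n → ZMod 2) → ZMod 2) :=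
  Submodule.span (ZMod 2) {g | ∃ S : Finset (Fin n), S.card ≤ d ∧ g = monFun S}

lemma addDeriv_add (h : Fin n → ZMod 2) (g₁ g₂) :
    addDeriv h (g₁ + g₂) = addDeriv h g₁ + addDeriv h g₂ := by
  funext x; simp [addDeriv]; ring

lemma addDeriv_smul (h : Fin n → ZMod 2) (c : ZMod 2) (g) :
    addDeriv h (c • g) = c • addDeriv h g := by
  funext x; simp [addDeriv]; ring

lemma addDeriv_zero (h : Fin n → ZMod 2) : addDeriv h (0 : (Fin n → ZMod 2) → ZMod 2) = 0 := by
  funext x; simp [addDeriv]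

lemma addDeriv_monFun (h : Fin n → ZMod 2) (S : Finset (Fin n)) :
    addDeriv h (monFun S) =
      ∑ U ∈ S.powerset.erase ∅, (∏ i ∈ U, h i) • monFun (S \ U) := by
  funext x
  have expand : ∏ i ∈ S, (x i + h i) =
      ∑ U ∈ S.powerset, (∏ i ∈ U, h i) * ∏ i ∈ S \ U, x i := by
    rw [← Finset.prod_add]
    exact Finset.prod_congr rfl fun i _ => by ring
  have hsplit : ∑ U ∈ S.powerset, (∏ i ∈ U, h i) * ∏ i ∈ S \ U, x i
      = (∑ U ∈ S.powerset.erase ∅, (∏ i ∈ U, h i) * ∏ i ∈ S \ U, x i) + ∏ i ∈ S, x i := by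
    rw [← Finset.sum_erase_add _ _ (Finset.empty_mem_powerset S)]
    simp
  have : addDeriv h (monFun S) x
      = ∑ U ∈ S.powerset.erase ∅, (∏ i ∈ U, h i) * ∏ i ∈ S \ U, x i := by
    show monFun S (x + h) + monFun S x = _
    unfold monFun
    have : ∏ i ∈ S, (x + h) i = ∏ i ∈ S, (x i + h i) := rfl
    rw [this, expand, hsplit, add_assoc, CharTwo.add_self_eq_zero, add_zero]
  rw [this]
  rw [Finset.sum_apply]
  rfl

lemma addDeriv_mem_W (h : Fin n → ZMod 2) {d : ℕ} {g} (hg : g ∈ W n (d + 1)) :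
    addDeriv h g ∈ W n d := by
  induction hg using Submodule.span_induction with
  | mem g hgen =>
    obtain ⟨S, hS, rfl⟩ := hgen
    rw [addDeriv_monFun]
    refine Submodule.sum_mem _ fun U hU => Submodule.smul_mem _ _ ?_
    refine Submodule.subset_span ⟨S \ U, ?_, rfl⟩
    rw [Finset.mem_erase, Finset.mem_powerset] at hU
    have h1 : 1 ≤ U.card := Finset.card_pos.2 (Finset.nonempty_of_ne_empty hU.1)
    have h2 : U.card ≤ S.card := Finset.card_le_card hU.2
    rw [Finset.card_sdiff_of_subset hU.2]
    omega
  | zero => rw [addDeriv_zero]; exact Submodule.zero_mem _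
  | add a b _ _ ha hb => rw [addDeriv_add]; exact Submodule.add_mem _ ha hb
  | smul c a _ ha => rw [addDeriv_smul]; exact Submodule.smul_mem _ _ ha

lemma W_zero_const {g : (Fin n → ZMod 2) → ZMod 2} (hg : g ∈ W n 0) :
    ∃ c, g = fun _ => c := by
  induction hg using Submodule.span_induction with
  | mem g hgen =>
    obtain ⟨S, hS, rfl⟩ := hgen
    rw [Nat.le_zero, Finset.card_eq_zero] at hS
    subst hS
    exact ⟨1, by funext x; simp [monFun]⟩
  | zero => exact ⟨0, rfl⟩
  | add a b _ _ ha hb =>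
    obtain ⟨c1, rfl⟩ := ha; obtain ⟨c2, rfl⟩ := hb
    exact ⟨c1 + c2, rfl⟩
  | smul c a _ ha =>
    obtain ⟨c1, rfl⟩ := ha
    exact ⟨c * c1, rfl⟩

lemma foldr_addDeriv_zero (l : List (Fin n → ZMod 2)) :
    l.foldr addDeriv (0 : (Fin n → ZMod 2) → ZMod 2) = 0 := by
  induction l with
  | nil => rfl
  | cons h t ih => simp only [List.foldr_cons, ih, addDeriv_zero]

lemma foldr_vanish : ∀ (l : List (Fin n → ZMod 2)) (d : ℕ)
    (g : (Fin n → ZMod 2) → ZMod 2), g ∈ W n d → d < l.length →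
    l.foldr addDeriv g = 0 := by
  intro l
  induction l using List.reverseRecOn with
  | nil => intro d g _ h; simp at h
  | append_singleton t h ih =>
    intro d g hg hlen
    rw [List.foldr_append]
    have hstep : [h].foldr addDeriv g = addDeriv h g := rfl
    rw [hstep]
    cases d with
    | zero =>
      obtain ⟨c, rfl⟩ := W_zero_const hg
      have : addDeriv h (fun _ => c) = 0 := by
        funext x; simp [addDeriv, CharTwo.add_self_eq_zero]
      rw [this, foldr_addDeriv_zero]
    | succ d =>
      refine ih d _ (addDeriv_mem_W h hg) ?_
      simp at hlen; omega


lemma zmod2_pow (a : ZMod 2) {m : ℕ} (hm : m ≠ 0) : a ^ m = a := by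
  rcases zmod2_cases a with rfl | rfl
  · exact zero_pow hm
  · exact one_pow m

lemma eval_mem_W (p : MvPolynomial (Fin n) (ZMod 2)) :
    (fun x => MvPolynomial.eval x p) ∈ W n p.totalDegree := by
  have heval : (fun x => MvPolynomial.eval x p)
      = ∑ d ∈ p.support, MvPolynomial.coeff d p • monFun d.support := by
    funext x
    rw [MvPolynomial.eval_eq']
    rw [Finset.sum_apply]
    refine Finset.sum_congr rfl fun d hd => ?_
    have : ∏ i, x i ^ d i = ∏ i ∈ d.support, x i ^ d i := by
      rw [Finset.prod_subset (Finset.subset_univ d.support)]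
      intro i _ hi
      simp [Finsupp.notMem_support_iff.1 hi]
    rw [this]
    have : ∏ i ∈ d.support, x i ^ d i = ∏ i ∈ d.support, x i :=
      Finset.prod_congr rfl fun i hi => zmod2_pow _ (Finsupp.mem_support_iff.1 hi)
    rw [this]
    rfl
  rw [heval]
  refine Submodule.sum_mem _ fun d hd => Submodule.smul_mem _ _ ?_
  refine Submodule.subset_span ⟨d.support, ?_, rfl⟩
  calc d.support.card = ∑ i ∈ d.support, 1 := by simp
    _ ≤ ∑ i ∈ d.support, d i := Finset.sum_le_sum fun i hi => by
        have := Finsupp.mem_support_iff.1 hi; omega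
    _ ≤ p.totalDegree := MvPolynomial.le_totalDegree hd


def indF (T : Finset (Fin n)) : Fin n → ZMod 2 := fun i => if i ∈ T then 1 else 0

lemma indF_insert {a : Fin n} {T : Finset (Fin n)} (ha : a ∉ T) :
    indF (insert a T) = indF {a} + indF T := by
  funext i
  simp only [indF, Finset.mem_insert, Finset.mem_singleton, Pi.add_apply]
  by_cases h : i = a
  · subst h; simp [ha]
  · simp [h]

lemma foldr_addDeriv_inds (g : (Fin n → ZMod 2) → ZMod 2) :
    ∀ (l : List (Fin n)), l.Nodup → ∀ x,
      (l.map (fun i => indF {i})).foldr addDeriv g x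
        = ∑ T ∈ l.toFinset.powerset, g (x + indF T) := by
  intro l
  induction l with
  | nil =>
    intro _ x
    simp only [List.map_nil, List.foldr_nil, List.toFinset_nil, Finset.powerset_empty,
      Finset.sum_singleton]
    congr 1
    funext i; simp [indF]
  | cons a t ih =>
    intro hnd x
    have hat : a ∉ t := by simp [List.nodup_cons] at hnd; exact hnd.1
    have hndt : t.Nodup := (List.nodup_cons.1 hnd).2
    have hatf : a ∉ t.toFinset := by simpa using hat
    show addDeriv (indF {a}) ((t.map (fun i => indF {i})).foldr addDeriv g) x = _
    rw [addDeriv]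
    rw [ih hndt (x + indF {a}), ih hndt x]
    rw [List.toFinset_cons, Finset.powerset_insert, Finset.sum_union, Finset.sum_image]
    · rw [add_comm]
      congr 1
      refine Finset.sum_congr rfl fun T hT => ?_
      rw [Finset.mem_powerset] at hT
      have haT : a ∉ T := fun h => hatf (hT h)
      rw [indF_insert haT, ← add_assoc]
    · intro T1 h1 T2 h2 heq
      rw [Finset.mem_coe, Finset.mem_powerset] at h1 h2
      have e1 : a ∉ T1 := fun h => hatf (h1 h)
      have e2 : a ∉ T2 := fun h => hatf (h2 h)
      rw [← Finset.erase_insert e1, ← Finset.erase_insert e2, heq]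
    · rw [Finset.disjoint_left]
      intro T hT1 hT2
      rw [Finset.mem_powerset] at hT1
      rw [Finset.mem_image] at hT2
      obtain ⟨T', _, rfl⟩ := hT2
      exact hatf (hT1 (Finset.mem_insert_self a T'))


lemma foldr_vanish_of_all_k {k : ℕ} {g : (Fin n → ZMod 2) → ZMod 2}
    (hk : ∀ hs : Fin k → (Fin n → ZMod 2), ∀ x,
      (List.ofFn hs).foldr addDeriv g x = 0)
    (l : List (Fin n → ZMod 2)) (hl : k ≤ l.length) :
    l.foldr addDeriv g = 0 := by
  have base : ∀ m : List (Fin n → ZMod 2), m.length = k → m.foldr addDeriv g = 0 := by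
    intro m hm
    have hof : List.ofFn (fun i : Fin k => m.get (Fin.cast hm.symm i)) = m := by
      apply List.ext_get
      · simp [hm]
      · intro i h1 h2
        simp
    funext x
    rw [← hof]
    exact hk _ x
  have hsplit : l = l.take (l.length - k) ++ l.drop (l.length - k) := by
    rw [List.take_append_drop]
  rw [hsplit, List.foldr_append]
  rw [base (l.drop (l.length - k)) (by rw [List.length_drop]; omega)]
  exact foldr_addDeriv_zero _

lemma c_eq_zero {k : ℕ} {g : (Fin n → ZMod 2) → ZMod 2}
    (hk : ∀ hs : Fin k → (Fin n → ZMod 2), ∀ x,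
      (List.ofFn hs).foldr addDeriv g x = 0)
    (S : Finset (Fin n)) (hcard : k ≤ S.card) :
    ∑ T ∈ S.powerset, g (indF T) = 0 := by
  have hnd : (S.sort (· ≤ ·)).Nodup := S.sort_nodup _
  have hto : (S.sort (· ≤ ·)).toFinset = S := S.sort_toFinset _
  have hlen : (S.sort (· ≤ ·)).length = S.card := S.length_sort _
  have h0 := foldr_vanish_of_all_k hk ((S.sort (· ≤ ·)).map (fun i => indF {i}))
      (by rw [List.length_map]; omega)
  have h1 := foldr_addDeriv_inds g (S.sort (· ≤ ·)) hnd 0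
  rw [h0] at h1
  rw [hto] at h1
  simp only [zero_add] at h1
  exact h1.symm

lemma moebius (g : (Fin n → ZMod 2) → ZMod 2) (U : Finset (Fin n)) :
    ∑ S ∈ U.powerset, ∑ T ∈ S.powerset, g (indF T) = g (indF U) := by
  have swap : ∑ S ∈ U.powerset, ∑ T ∈ S.powerset, g (indF T)
      = ∑ T ∈ U.powerset, ∑ S ∈ Finset.Icc T U, g (indF T) := by
    refine Finset.sum_comm' ?_
    intro S T
    simp only [Finset.mem_powerset, Finset.mem_Icc]
    constructor
    · rintro ⟨h1, h2⟩; exact ⟨⟨h2, h1⟩, h2.trans h1⟩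
    · rintro ⟨⟨h1, h2⟩, h3⟩; exact ⟨h2, h1⟩
  rw [swap]
  rw [Finset.sum_eq_single U]
  · rw [Finset.sum_const, Finset.card_Icc_finset le_rfl]
    simp
  · intro T hT hne
    rw [Finset.mem_powerset] at hT
    rw [Finset.sum_const, Finset.card_Icc_finset hT]
    have hlt : T.card < U.card := Finset.card_lt_card (lt_of_le_of_ne hT hne)
    have : U.card - T.card ≠ 0 := by omega
    obtain ⟨m, hm⟩ := Nat.exists_eq_succ_of_ne_zero this
    rw [hm, pow_succ]
    rw [nsmul_eq_mul]
    push_cast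
    rw [show ((2 : ZMod 2)) = 0 from rfl]
    ring
  · intro h
    exact absurd (Finset.mem_powerset.2 le_rfl) h


noncomputable def anf (g : (Fin n → ZMod 2) → ZMod 2) : MvPolynomial (Fin n) (ZMod 2) :=
  ∑ S : Finset (Fin n),
    MvPolynomial.C (∑ T ∈ S.powerset, g (indF T)) * ∏ i ∈ S, MvPolynomial.X i

lemma anf_totalDegree_lt {k : ℕ} (hk : 1 ≤ k) (g : (Fin n → ZMod 2) → ZMod 2)
    (hc : ∀ S : Finset (Fin n), k ≤ S.card → ∑ T ∈ S.powerset, g (indF T) = 0) :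
    (anf g).totalDegree < k := by
  unfold anf
  refine lt_of_le_of_lt (MvPolynomial.totalDegree_finset_sum _ _) ?_
  rw [Finset.sup_lt_iff (show (⊥ : ℕ) < k by rw [show (⊥ : ℕ) = 0 from rfl]; omega)]
  intro S _
  by_cases hS : ∑ T ∈ S.powerset, g (indF T) = 0
  · rw [hS]; simp; omega
  · have hcard : S.card < k := by
      by_contra hge
      exact hS (hc S (by omega))
    refine lt_of_le_of_lt ?_ hcard
    refine le_trans (MvPolynomial.totalDegree_mul _ _) ?_
    rw [MvPolynomial.totalDegree_C, zero_add]
    refine le_trans (MvPolynomial.totalDegree_finset_prod _ _) ?_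
    refine le_trans (Finset.sum_le_sum fun i _ => le_of_eq (MvPolynomial.totalDegree_X i)) ?_
    simp

lemma eval_anf (g : (Fin n → ZMod 2) → ZMod 2) (x : Fin n → ZMod 2) :
    MvPolynomial.eval x (anf g) = g x := by
  have hx : x = indF (Finset.univ.filter (fun i => x i = 1)) := by
    funext i
    rcases zmod2_cases (x i) with h | h <;> simp [indF, h]
  set U := Finset.univ.filter (fun i => x i = 1) with hU
  unfold anf
  rw [map_sum]
  have hterm : ∀ S : Finset (Fin n),
      MvPolynomial.eval x (MvPolynomial.C (∑ T ∈ S.powerset, g (indF T))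
        * ∏ i ∈ S, MvPolynomial.X i)
      = if S ⊆ U then ∑ T ∈ S.powerset, g (indF T) else 0 := by
    intro S
    rw [map_mul, MvPolynomial.eval_C, map_prod]
    simp only [MvPolynomial.eval_X]
    by_cases hSU : S ⊆ U
    · rw [if_pos hSU, Finset.prod_eq_one, mul_one]
      intro i hi
      have := hSU hi
      rw [hU] at this
      simpa using this
    · rw [if_neg hSU]
      obtain ⟨i, hiS, hiU⟩ := Finset.not_subset.1 hSU
      rw [Finset.prod_eq_zero hiS, mul_zero]
      rcases zmod2_cases (x i) with h | h
      · exact h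
      · exact absurd (by simp [hU, h]) hiU
  rw [Finset.sum_congr rfl fun S _ => hterm S]
  rw [Finset.sum_ite, Finset.sum_const, smul_zero, add_zero]
  have hfilter : Finset.univ.filter (fun S => S ⊆ U) = U.powerset := by
    ext S; simp [Finset.mem_powerset]
  rw [hfilter, moebius]
  conv_rhs => rw [hx]


lemma foldr_mulDiff_chi (g : (Fin n → ZMod 2) → ZMod 2) (l : List (Fin n → ZMod 2)) :
    l.foldr mulDiff (fun x => chi (g x)) = fun x => chi (l.foldr addDeriv g x) := by
  induction l with
  | nil => rfl
  | cons h t ih =>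
    funext x
    show mulDiff h (t.foldr mulDiff fun x => chi (g x)) x = _
    rw [ih]
    show chi (t.foldr addDeriv g (x + h)) * chi (t.foldr addDeriv g x) = _
    rw [← chi_add]
    rfl

lemma gowers_eq_one_iff {k : ℕ} (g : (Fin n → ZMod 2) → ZMod 2) :
    gowersPow k (fun x => chi (g x)) = 1 ↔
      ∀ hs : Fin k → (Fin n → ZMod 2), ∀ x,
        (List.ofFn hs).foldr addDeriv g x = 0 := by
  have hN : ((2 : ℝ) ^ (n * (k + 1))) ≠ 0 := by positivity
  have hcard : ((Fintype.card ((Fin k → (Fin n → ZMod 2)) × (Fin n → ZMod 2)) : ℕ) : ℝ)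
      = (2 : ℝ) ^ (n * (k + 1)) := by
    rw [Fintype.card_prod, Fintype.card_fun, Fintype.card_fun, ZMod.card,
      Fintype.card_fin, Fintype.card_fin, ← pow_mul, ← pow_add]
    push_cast
    ring_nf
  have hsum : (∑ hs : Fin k → (Fin n → ZMod 2), ∑ x : Fin n → ZMod 2,
        ((List.ofFn hs).foldr mulDiff (fun x => chi (g x))) x)
      = ∑ p : (Fin k → (Fin n → ZMod 2)) × (Fin n → ZMod 2),
          chi ((List.ofFn p.1).foldr addDeriv g p.2) := by
    rw [← Finset.sum_product']
    rw [Finset.univ_product_univ]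
    refine Finset.sum_congr rfl fun p _ => ?_
    rw [foldr_mulDiff_chi]
  rw [gowersPow, hsum]
  have hconst : (∑ _p : (Fin k → (Fin n → ZMod 2)) × (Fin n → ZMod 2), (1 : ℝ))
      = (2 : ℝ) ^ (n * (k + 1)) := by
    rw [Finset.sum_const, Finset.card_univ, nsmul_eq_mul, mul_one, hcard]
  constructor
  · intro h1 hs x
    have hSig : (∑ p : (Fin k → (Fin n → ZMod 2)) × (Fin n → ZMod 2),
        chi ((List.ofFn p.1).foldr addDeriv g p.2)) = (2 : ℝ) ^ (n * (k + 1)) := by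
      field_simp at h1
      linarith [h1]
    by_contra hne
    have hlt : chi ((List.ofFn hs).foldr addDeriv g x) < 1 := by
      rcases zmod2_cases ((List.ofFn hs).foldr addDeriv g x) with h | h
      · exact absurd h hne
      · rw [h, chi_one]; norm_num
    have hstrict : (∑ p : (Fin k → (Fin n → ZMod 2)) × (Fin n → ZMod 2),
          chi ((List.ofFn p.1).foldr addDeriv g p.2))
        < ∑ _p : (Fin k → (Fin n → ZMod 2)) × (Fin n → ZMod 2), (1 : ℝ) :=
      Finset.sum_lt_sum (fun p _ => chi_le_one _) ⟨(hs, x), Finset.mem_univ _, hlt⟩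
    rw [hconst] at hstrict
    linarith
  · intro h
    have : ∀ p : (Fin k → (Fin n → ZMod 2)) × (Fin n → ZMod 2),
        chi ((List.ofFn p.1).foldr addDeriv g p.2) = 1 := fun p => by
      rw [h p.1 p.2, chi_zero]
    rw [Finset.sum_congr rfl fun p _ => this p, hconst, inv_mul_cancel₀ hN]

end GowersAux

/-- A `±1`-valued function has Gowers `U^k` norm equal to `1` if and only if it is a
phase polynomial of degree less than `k`, i.e. `f(x) = (-1)^(p(x))` for some
polynomial `p` over `Z_2` of total degree `< k`. -/

theorem gowers_norm_eq_one_iff_phase_polynomial (n k : ℕ) (hk : 1 ≤ k)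
    (f : (Fin n → ZMod 2) → ℝ) (hf : ∀ x, f x = 1 ∨ f x = -1) :
    gowersPow k f = 1 ↔
      ∃ p : MvPolynomial (Fin n) (ZMod 2), p.totalDegree < k ∧
        ∀ x, f x = (-1 : ℝ) ^ ((MvPolynomial.eval x p).val) := by
  classical
  set g : (Fin n → ZMod 2) → ZMod 2 := fun x => if f x = 1 then 0 else 1 with hg
  have hfg : ∀ x, f x = GowersAux.chi (g x) := by
    intro x
    rcases hf x with h | h
    · rw [hg]; simp only [h, if_pos, GowersAux.chi_zero]
    · have hne : f x ≠ 1 := by rw [h]; norm_num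
      rw [hg]; simp only [h]
      rw [if_neg (by norm_num : (-1 : ℝ) ≠ 1), GowersAux.chi_one]
  rw [show f = fun x => GowersAux.chi (g x) from funext hfg]
  rw [GowersAux.gowers_eq_one_iff g]
  constructor
  · intro hstar
    refine ⟨GowersAux.anf g,
      GowersAux.anf_totalDegree_lt hk g (fun S hS => GowersAux.c_eq_zero hstar S hS), ?_⟩
    intro x
    rw [GowersAux.eval_anf g x]
    rfl
  · rintro ⟨p, hdeg, hp⟩
    have hgp : g = fun x => MvPolynomial.eval x p := by
      funext x
      apply GowersAux.chi_inj
      exact hp x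
    intro hs x
    rw [hgp]
    have hv := GowersAux.foldr_vanish (List.ofFn hs) p.totalDegree _
      (GowersAux.eval_mem_W p) (by rw [List.length_ofFn]; omega)
    exact congrFun hv x
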